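/- arXiv:2206.08552 — 4 statements merged into one kernel-verified Lean document; each statement's English description precedes it below -/
import Mathlib

section
/- Let φ be a Bernstein function without drift which satisfies the lower weak scaling condition: there exist a₁ > 0 and δ₁ ∈ (0,1) such that a₁ λ^{δ₁} φ(t) ≤ φ(λt) for all t ≥ 1 and λ ≥ 1. Then there exists a constant c ∈ (0,1] such that c·φ(λ)/λ ≤ φ'(λ) ≤ φ(λ)/λ for all λ ≥ 1. -/
set_option maxHeartbeats 1000000


open MeasureTheory Real Set
open scoped ENNReal NNReal

lemma bdc_min_le {t : ℝ} (ht : 0 < t) {x : ℝ} (hx : (1:ℝ)/2 ≤ x) :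
    t * Real.exp (-(x * t)) ≤ min 1 t := by
  have hexp : Real.exp (-(x*t)) ≤ Real.exp (-(t/2)) := by
    apply Real.exp_le_exp.mpr; nlinarith
  have h1 : t * Real.exp (-(x*t)) ≤ t * Real.exp (-(t/2)) := by
    nlinarith [Real.exp_pos (-(x*t))]
  refine le_min ?_ ?_
  · have h4 : 1 + t/4 ≤ Real.exp (t/4) := by
      have := Real.add_one_le_exp (t/4); linarith
    have hsq : (1 + t/4)^2 ≤ Real.exp (t/2) := by
      have hp := Real.exp_pos (t/4)
      calc (1 + t/4)^2 ≤ (Real.exp (t/4))^2 := by nlinarith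
        _ = Real.exp (t/2) := by rw [sq, ← Real.exp_add]; ring_nf
    have hts : t ≤ (1 + t/4)^2 := by nlinarith [sq_nonneg (1 - t/4)]
    have hE : Real.exp (-(t/2)) * Real.exp (t/2) = 1 := by
      rw [← Real.exp_add]; ring_nf; exact Real.exp_zero
    have hp1 := Real.exp_pos (t/2)
    have hp2 := Real.exp_pos (-(t/2))
    nlinarith
  · have hle1 : Real.exp (-(x*t)) ≤ 1 := Real.exp_le_one_iff.mpr (by nlinarith)
    nlinarith

/-- If `φ` is a Bernstein function without drift satisfying the lower
weak scaling condition (`a₁ λ^{δ₁} φ(t) ≤ φ(λt)` for `t, λ ≥ 1`), then there is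
`c ∈ (0,1]` with `c·φ(λ)/λ ≤ φ'(λ) ≤ φ(λ)/λ` for all `λ ≥ 1`. -/
theorem bernstein_deriv_comparable
    (φ : ℝ → ℝ) (μ : Measure ℝ)
    (hμne : μ (Ioi (0 : ℝ)) ≠ 0)
    (hμfin : ∫⁻ t in Ioi (0 : ℝ), ENNReal.ofReal (min 1 t) ∂μ < ⊤)
    (hint : ∀ l > (0 : ℝ), IntegrableOn (fun t => 1 - Real.exp (-(l * t))) (Ioi 0) μ)
    (hφ : ∀ l > (0 : ℝ), φ l = ∫ t in Ioi (0 : ℝ), (1 - Real.exp (-(l * t))) ∂μ)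
    (a₁ δ₁ : ℝ) (ha₁ : 0 < a₁) (hδ₁ : δ₁ ∈ Ioo (0 : ℝ) 1)
    (hscal : ∀ t ≥ (1 : ℝ), ∀ l ≥ (1 : ℝ), a₁ * l ^ δ₁ * φ t ≤ φ (l * t)) :
    ∃ c : ℝ, c ∈ Ioc (0 : ℝ) 1 ∧
      ∀ l ≥ (1 : ℝ), c * (φ l / l) ≤ deriv φ l ∧ deriv φ l ≤ φ l / l := by
  set ν := μ.restrict (Ioi (0:ℝ)) with hνdef
  have haepos : ∀ᵐ t ∂ν, t ∈ Ioi (0:ℝ) := ae_restrict_mem measurableSet_Ioi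
  -- the bound `min 1 t` is integrable
  have hbound_int : Integrable (fun t => min 1 t) ν := by
    refine ⟨(continuous_const.min continuous_id).aestronglyMeasurable, ?_⟩
    rw [HasFiniteIntegral]
    have : ∀ᵐ t ∂ν, ‖min 1 t‖ₑ = ENNReal.ofReal (min 1 t) := by
      filter_upwards [haepos] with t ht
      exact Real.enorm_eq_ofReal (le_min zero_le_one ht.le)
    rw [lintegral_congr_ae this]
    exact hμfin
  -- derivative of the integral
  have key : ∀ l : ℝ, 1 ≤ l →
      Integrable (fun t => t * Real.exp (-(l*t))) ν ∧
      HasDerivAt (fun x => ∫ t, (1 - Real.exp (-(x*t))) ∂ν)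
        (∫ t, t * Real.exp (-(l*t)) ∂ν) l := by
    intro l hl
    refine hasDerivAt_integral_of_dominated_loc_of_deriv_le (s := Metric.ball l (1/2))
      (F := fun x t => 1 - Real.exp (-(x*t)))
      (F' := fun x t => t * Real.exp (-(x*t)))
      (bound := fun t => min 1 t) (Metric.ball_mem_nhds l (by norm_num)) ?_ ?_ ?_ ?_ hbound_int ?_
    · exact Filter.Eventually.of_forall fun x =>
        (Continuous.aestronglyMeasurable (by continuity))
    · exact hint l (by linarith)
    · exact Continuous.aestronglyMeasurable (by continuity)
    · filter_upwards [haepos] with t ht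
      intro x hx
      rw [Metric.mem_ball, Real.dist_eq] at hx
      have hx2 : (1:ℝ)/2 ≤ x := by
        cases abs_lt.mp hx with
        | intro h1 h2 => linarith
      have ht' : (0:ℝ) < t := ht
      rw [Real.norm_eq_abs, abs_of_nonneg (mul_nonneg ht'.le (Real.exp_pos _).le)]
      exact bdc_min_le ht hx2
    · filter_upwards [haepos] with t _
      intro x _
      have h1 : HasDerivAt (fun y : ℝ => -(y*t)) (-(1*t)) x :=
        ((hasDerivAt_id x).mul_const t).neg
      have h3 := (h1.exp).const_sub 1
      convert h3 using 1
      ring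
  -- nonnegativity of φ on (0, ∞)
  have hφnn : ∀ l : ℝ, 0 < l → 0 ≤ φ l := by
    intro l hl
    rw [hφ l hl]
    apply setIntegral_nonneg measurableSet_Ioi
    intro t ht
    have ht' : (0:ℝ) < t := ht
    have : Real.exp (-(l*t)) ≤ 1 := Real.exp_le_one_iff.mpr (by nlinarith)
    linarith
  -- choice of L
  set L : ℝ := max 2 ((2/a₁) ^ (δ₁⁻¹)) with hLdef
  have hL2 : (2:ℝ) ≤ L := le_max_left _ _
  have hLd : (2:ℝ) ≤ a₁ * L ^ δ₁ := by
    have hb : (0:ℝ) < 2/a₁ := by positivity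
    have h1 : ((2/a₁) ^ (δ₁⁻¹)) ^ δ₁ = 2/a₁ := by
      rw [← Real.rpow_mul hb.le, inv_mul_cancel₀ (ne_of_gt hδ₁.1), Real.rpow_one]
    have hL' : (2/a₁) ^ (δ₁⁻¹) ≤ L := le_max_right _ _
    have h2 : (2/a₁) ≤ L ^ δ₁ := by
      rw [← h1]
      exact Real.rpow_le_rpow (Real.rpow_nonneg hb.le _) hL' hδ₁.1.le
    calc (2:ℝ) = a₁ * (2/a₁) := by field_simp
      _ ≤ a₁ * L ^ δ₁ := by nlinarith
  refine ⟨(L-1)⁻¹, ⟨inv_pos.mpr (by linarith : (0:ℝ) < L - 1),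
    inv_le_one_of_one_le₀ (by linarith)⟩, ?_⟩
  intro l hl
  have hl0 : (0:ℝ) < l := by linarith
  set D : ℝ := ∫ t, t * Real.exp (-(l*t)) ∂ν with hDdef
  -- deriv φ l = D
  have hderiv : deriv φ l = D := by
    have heq : φ =ᶠ[nhds l] (fun x => ∫ t, (1 - Real.exp (-(x*t))) ∂ν) := by
      filter_upwards [Ioi_mem_nhds hl0] with x hx
      exact hφ x hx
    rw [heq.deriv_eq]
    exact ((key l hl).2).deriv
  -- upper bound : l * D ≤ φ l
  have hup : l * D ≤ φ l := by
    rw [hφ l hl0, hDdef, ← integral_const_mul]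
    apply integral_mono_ae ((key l hl).1.const_mul l) (hint l hl0)
    filter_upwards [haepos] with t ht
    have h1 := Real.add_one_le_exp (l*t)
    have hE : Real.exp (-(l*t)) * Real.exp (l*t) = 1 := by
      rw [← Real.exp_add]; ring_nf; exact Real.exp_zero
    have hp := Real.exp_pos (l*t)
    have hp2 := Real.exp_pos (-(l*t))
    nlinarith
  -- lower bound : φ l ≤ (L-1) * l * D
  have hlow : φ l ≤ (L-1) * l * D := by
    have hLl : (0:ℝ) < L * l := mul_pos (by linarith) hl0
    have hsc := hscal l hl L (by linarith)
    have hstep : φ (L*l) - φ l ≤ (L-1) * l * D := by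
      have hmono : (∫ t, ((1 - Real.exp (-(L*l*t))) - (1 - Real.exp (-(l*t)))) ∂ν)
          ≤ ∫ t, (L-1)*l * (t * Real.exp (-(l*t))) ∂ν := by
        apply integral_mono_ae (((hint (L*l) hLl).sub (hint l hl0)))
          (((key l hl).1).const_mul _)
        filter_upwards [haepos] with t ht
        simp only [Pi.sub_apply]
        have ht' : (0:ℝ) < t := ht
        have hsplit : Real.exp (-(L*l*t)) = Real.exp (-(l*t)) * Real.exp (-((L-1)*(l*t))) := by
          rw [← Real.exp_add]; ring_nf
        have h2 := Real.add_one_le_exp (-((L-1)*(l*t)))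
        have hp := Real.exp_pos (-(l*t))
        have hp2 := Real.exp_pos (-((L-1)*(l*t)))
        nlinarith
      rw [hφ (L*l) hLl, hφ l hl0,
        ← integral_sub (hint (L*l) hLl) (hint l hl0)]
      calc _ ≤ ∫ t, (L-1)*l * (t * Real.exp (-(l*t))) ∂ν := hmono
        _ = (L-1)*l*D := by rw [hDdef, integral_const_mul]
    have hφl := hφnn l hl0
    nlinarith
  constructor
  · rw [hderiv]
    have hL1 : (0:ℝ) < L - 1 := by linarith
    have h2 : φ l / l ≤ (L-1) * D := by
      rw [div_le_iff₀ hl0]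
      calc φ l ≤ (L-1)*l*D := hlow
        _ = (L-1)*D*l := by ring
    calc (L-1)⁻¹ * (φ l / l) ≤ (L-1)⁻¹ * ((L-1)*D) := by
          exact mul_le_mul_of_nonneg_left h2 (inv_pos.mpr hL1).le
      _ = D := by field_simp
  · rw [hderiv, le_div_iff₀ hl0, mul_comm]
    exact hup
end

section
/- Let φ be a Bernstein function without drift and let P satisfy the sharp Poisson kernel estimate for φ. Then there is a constant C ≥ 1, depending only on d, φ and c₀, such that for every x ∈ B: C^{−1} · δ(x)^{−2} φ(δ(x)^{−2})^{−1} ≤ ∫_{∂B} P(x,z) σ(dz) ≤ C · δ(x)^{−2} φ(δ(x)^{−2})^{−1}. -/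
open MeasureTheory Real Set Metric
open scoped ENNReal NNReal

noncomputable section PoissonAux

abbrev Esp (n : ℕ) : Type := EuclideanSpace ℝ (Fin n)

def ptail {n : ℕ} (z : Esp (n+1)) : Esp n := WithLp.toLp 2 (fun i : Fin n => z i.succ)

def pcons {n : ℕ} (a : ℝ) (y : Esp n) : Esp (n+1) := WithLp.toLp 2 (Fin.cons a y.ofLp : Fin (n+1) → ℝ)

@[simp] lemma pcons_zero {n : ℕ} (a : ℝ) (y : Esp n) : (pcons a y) 0 = a := rfl

@[simp] lemma pcons_succ {n : ℕ} (a : ℝ) (y : Esp n) (i : Fin n) :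
    (pcons a y) i.succ = y i := by
  simp [pcons]

@[simp] lemma ptail_pcons {n : ℕ} (a : ℝ) (y : Esp n) : ptail (pcons a y) = y := by
  ext i; simp [ptail]

lemma pcons_self {n : ℕ} (z : Esp (n+1)) : pcons (z 0) (ptail z) = z := by
  ext i; refine Fin.cases ?_ (fun j => ?_) i <;> simp [ptail]

lemma ptail_sub {n : ℕ} (z w : Esp (n+1)) : ptail (z - w) = ptail z - ptail w := by
  ext i; simp [ptail]

lemma norm_pcons_sq {n : ℕ} (a : ℝ) (y : Esp n) : ‖pcons a y‖ ^ 2 = a ^ 2 + ‖y‖ ^ 2 := by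
  rw [EuclideanSpace.norm_eq, EuclideanSpace.norm_eq,
    Real.sq_sqrt (by positivity), Real.sq_sqrt (by positivity)]
  rw [Fin.sum_univ_succ]
  simp [Real.norm_eq_abs, sq_abs]

lemma norm_decomp {n : ℕ} (z : Esp (n+1)) : ‖z‖ ^ 2 = (z 0) ^ 2 + ‖ptail z‖ ^ 2 := by
  conv_lhs => rw [← pcons_self z]
  exact norm_pcons_sq _ _

lemma le_of_sq_le_sq' {a b : ℝ} (hb : 0 ≤ b) (h : a ^ 2 ≤ b ^ 2) (ha : 0 ≤ a) : a ≤ b := by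
  nlinarith

lemma norm_ptail_le {n : ℕ} (z : Esp (n+1)) : ‖ptail z‖ ≤ ‖z‖ := by
  refine le_of_sq_le_sq' (norm_nonneg _) ?_ (norm_nonneg _)
  rw [norm_decomp z]; nlinarith [sq_nonneg (z 0)]

lemma lip_ptail {n : ℕ} : LipschitzWith 1 (ptail : Esp (n+1) → Esp n) := by
  refine LipschitzWith.of_dist_le_mul fun z w => ?_
  rw [dist_eq_norm, dist_eq_norm, ← ptail_sub, NNReal.coe_one, one_mul]
  exact norm_ptail_le _


def kap (n : ℕ) : ℝ≥0∞ := μH[(n:ℝ)] (ball (0 : Esp n) 1)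

lemma cast_finrank (n : ℕ) : ((n:ℝ)) = ((Module.finrank ℝ (Esp n) : ℕ) : ℝ) := by
  rw [finrank_euclideanSpace_fin]

lemma ball_meas (n : ℕ) {r : ℝ} (hr : 0 ≤ r) (x : Esp n) :
    μH[(n:ℝ)] (closedBall x r) = ENNReal.ofReal (r ^ n) * kap n := by
  rw [kap, cast_finrank n]
  rw [Measure.addHaar_closedBall _ x hr, finrank_euclideanSpace_fin]

lemma kap_pos (n : ℕ) : 0 < kap n := by
  rw [kap, cast_finrank n]
  exact measure_ball_pos _ _ one_pos

lemma kap_lt_top (n : ℕ) : kap n < ⊤ := by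
  rw [kap, cast_finrank n]
  exact measure_ball_lt_top

lemma rot_meas {n : ℕ} {z₀ w₀ : Esp n} (hz : ‖z₀‖ = 1) (hw : ‖w₀‖ = 1) (r : ℝ) {e : ℝ}
    (he : 0 ≤ e) :
    μH[e] (sphere (0 : Esp n) 1 ∩ closedBall z₀ r) =
      μH[e] (sphere (0 : Esp n) 1 ∩ closedBall w₀ r) := by
  set f := Submodule.reflection (ℝ ∙ (z₀ - w₀))ᗮ with hf
  have hfz : f z₀ = w₀ := Submodule.reflection_sub (hz.trans hw.symm)
  have himg : f '' (sphere (0 : Esp n) 1 ∩ closedBall z₀ r) =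
      sphere (0 : Esp n) 1 ∩ closedBall w₀ r := by
    apply Subset.antisymm
    · rintro w ⟨u, ⟨hu1, hu2⟩, rfl⟩
      refine ⟨?_, ?_⟩
      · rw [mem_sphere_zero_iff_norm] at hu1 ⊢
        rw [f.norm_map]; exact hu1
      · rw [mem_closedBall] at hu2 ⊢
        rw [← hfz, f.dist_map]; exact hu2
    · rintro w ⟨hw1, hw2⟩
      refine ⟨f.symm w, ⟨?_, ?_⟩, f.apply_symm_apply w⟩
      · rw [mem_sphere_zero_iff_norm] at hw1 ⊢
        rw [f.symm.norm_map]; exact hw1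
      · rw [mem_closedBall] at hw2 ⊢
        have : dist (f (f.symm w)) (f z₀) = dist (f.symm w) z₀ := f.dist_map _ _
        rw [f.apply_symm_apply, hfz] at this
        rw [← this]; exact hw2
  rw [← himg, f.isometry.hausdorffMeasure_image (Or.inl he)]


lemma pcons_sub {n : ℕ} (a b : ℝ) (y y' : Esp n) :
    pcons a y - pcons b y' = pcons (a - b) (y - y') := by
  ext i
  refine Fin.cases ?_ (fun j => ?_) i
  · simp
  · simp

set_option maxHeartbeats 2000000 in
lemma graph_bound (m : ℕ) {η r : ℝ} (hη : 0 < η) (hη1 : η ≤ 1) (hr : 0 ≤ r) :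
    μH[((m+1 : ℕ):ℝ)] {z : Esp (m+2) | ‖z‖ = 1 ∧ η ≤ z 0 ∧ ‖ptail z‖ ≤ r}
      ≤ ENNReal.ofReal ((2/η)^(m+1)) * (ENNReal.ofReal (r^(m+1)) * kap (m+1)) := by
  set G : Esp (m+1) → Esp (m+2) := fun y => pcons (Real.sqrt (1-‖y‖^2)) y with hG
  set s : Set (Esp (m+1)) := {y | ‖y‖ ≤ r ∧ ‖y‖^2 ≤ 1 - η^2} with hs
  -- facts about members of s
  have memfact : ∀ y ∈ s, η ≤ Real.sqrt (1-‖y‖^2) ∧ Real.sqrt (1-‖y‖^2)^2 = 1-‖y‖^2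
      ∧ ‖y‖ ≤ 1 ∧ Real.sqrt (1-‖y‖^2) ≤ 1 := by
    rintro y ⟨hy1, hy2⟩
    have h2 : η^2 ≤ 1 - ‖y‖^2 := by nlinarith [norm_nonneg y]
    have h0 : (0:ℝ) ≤ 1 - ‖y‖^2 := le_trans (by positivity) h2
    refine ⟨?_, Real.sq_sqrt h0, ?_, ?_⟩
    · calc η = Real.sqrt (η^2) := (Real.sqrt_sq hη.le).symm
        _ ≤ _ := Real.sqrt_le_sqrt h2
    · nlinarith [norm_nonneg y]
    · calc Real.sqrt (1-‖y‖^2) ≤ Real.sqrt 1 := Real.sqrt_le_sqrt (by nlinarith [norm_nonneg y])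
        _ = 1 := Real.sqrt_one
  -- subset
  have hsub : {z : Esp (m+2) | ‖z‖ = 1 ∧ η ≤ z 0 ∧ ‖ptail z‖ ≤ r} ⊆ G '' s := by
    rintro z ⟨hz1, hz2, hz3⟩
    have hdec : (z 0) ^ 2 + ‖ptail z‖ ^ 2 = 1 := by
      rw [← norm_decomp z, hz1]; norm_num
    have hty : ‖ptail z‖^2 = 1 - (z 0)^2 := by linarith
    refine ⟨ptail z, ⟨hz3, ?_⟩, ?_⟩
    · rw [hty]; nlinarith
    · have hsq : Real.sqrt (1 - ‖ptail z‖^2) = z 0 := by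
        rw [hty]
        have : (1 : ℝ) - (1 - (z 0)^2) = (z 0)^2 := by ring
        rw [this, Real.sqrt_sq (le_trans hη.le hz2)]
      have hGz : G (ptail z) = pcons (Real.sqrt (1 - ‖ptail z‖^2)) (ptail z) := rfl
      rw [hGz, hsq, pcons_self]
  -- Lipschitz
  have hlip : LipschitzOnWith (Real.toNNReal (2/η)) G s := by
    rw [lipschitzOnWith_iff_dist_le_mul]
    intro y hy y' hy'
    obtain ⟨ha, ha2, hy1, hale⟩ := memfact y hy
    obtain ⟨ha', ha2', hy1', hale'⟩ := memfact y' hy'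
    set a := Real.sqrt (1-‖y‖^2)
    set a' := Real.sqrt (1-‖y'‖^2)
    have hcoe : (Real.toNNReal (2/η) : ℝ) = 2/η := Real.coe_toNNReal _ (by positivity)
    rw [hcoe, dist_eq_norm, dist_eq_norm, hG]
    simp only
    rw [pcons_sub]
    have hyy' : |‖y'‖ - ‖y‖| ≤ ‖y - y'‖ := by
      rw [norm_sub_rev]; exact abs_norm_sub_norm_le y' y
    have e1 : (a - a')*(a+a') = ‖y'‖^2 - ‖y‖^2 := by
      have : a^2 - a'^2 = ‖y'‖^2 - ‖y‖^2 := by rw [ha2, ha2']; ring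
      linarith [sq_abs a, sq_abs a', this, (by ring : (a-a')*(a+a') = a^2 - a'^2)]
    have e2 : |a - a'| * (a + a') = |‖y'‖^2 - ‖y‖^2| := by
      rw [← e1, abs_mul, abs_of_nonneg (by positivity : (0:ℝ) ≤ a + a')]
    have e3 : |‖y'‖^2 - ‖y‖^2| ≤ 2 * ‖y - y'‖ := by
      have hfac : ‖y'‖^2 - ‖y‖^2 = (‖y'‖+‖y‖)*(‖y'‖-‖y‖) := by ring
      rw [hfac, abs_mul, abs_of_nonneg (by positivity : (0:ℝ) ≤ ‖y'‖+‖y‖)]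
      exact mul_le_mul (by linarith) hyy' (abs_nonneg _) (by norm_num)
    have e4 : |a - a'| * (2*η) ≤ 2 * ‖y - y'‖ := by
      calc |a - a'| * (2*η) ≤ |a - a'| * (a + a') := by
            apply mul_le_mul_of_nonneg_left (by linarith) (abs_nonneg _)
        _ = |‖y'‖^2 - ‖y‖^2| := e2
        _ ≤ 2 * ‖y - y'‖ := e3
    set b := ‖y - y'‖ with hb
    have hb0 : 0 ≤ b := norm_nonneg _
    have e5 : |a - a'| * η ≤ b := by nlinarith
    have e6 : (a - a')^2 * η^2 ≤ b^2 := by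
      have h := mul_le_mul_of_nonneg_left e5 (abs_nonneg (a - a'))
      nlinarith [sq_abs (a - a'), abs_nonneg (a - a')]
    refine le_of_sq_le_sq' (by positivity) ?_ (norm_nonneg _)
    rw [norm_pcons_sq]
    have hη2 : η^2 ≤ 1 := by nlinarith
    have hb2 : b^2 * η^2 ≤ b^2 := by
      have := mul_le_mul_of_nonneg_left hη2 (sq_nonneg b)
      simpa using this
    have expand : (2 / η * ‖y - y'‖)^2 = 4 * b^2 / η^2 := by
      rw [← hb]; field_simp; ring
    rw [expand]
    show (a - a')^2 + b^2 ≤ 4 * b^2 / η^2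
    rw [le_div_iff₀ (by positivity : (0:ℝ) < η^2)]
    nlinarith [e6, hb2]
  -- conclude
  calc μH[((m+1 : ℕ):ℝ)] {z : Esp (m+2) | ‖z‖ = 1 ∧ η ≤ z 0 ∧ ‖ptail z‖ ≤ r}
      ≤ μH[((m+1 : ℕ):ℝ)] (G '' s) := measure_mono hsub
    _ ≤ (Real.toNNReal (2/η) : ℝ≥0∞) ^ (((m+1:ℕ)):ℝ) * μH[((m+1 : ℕ):ℝ)] s :=
        hlip.hausdorffMeasure_image_le (by positivity)
    _ ≤ ENNReal.ofReal ((2/η)^(m+1)) * (ENNReal.ofReal (r^(m+1)) * kap (m+1)) := by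
        gcongr
        · have : ((Real.toNNReal (2/η)) : ℝ≥0∞) ^ (((m+1:ℕ)):ℝ)
              = ENNReal.ofReal ((2/η)^(m+1)) := by
            rw [ENNReal.rpow_natCast, ENNReal.ofReal_pow (by positivity)]
            rfl
          exact le_of_eq this
        · rw [← ball_meas (m+1) hr (0 : Esp (m+1))]
          apply measure_mono
          intro y hy
          exact mem_closedBall_zero_iff.mpr hy.1

def e0 (m : ℕ) : Esp (m+2) := EuclideanSpace.single 0 1

lemma norm_e0 (m : ℕ) : ‖e0 m‖ = 1 := by
  rw [e0, EuclideanSpace.norm_single, norm_one]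

lemma e0_zero (m : ℕ) : (e0 m) 0 = 1 := by
  simp [e0, EuclideanSpace.single_apply]

lemma ptail_e0 (m : ℕ) : ptail (e0 m) = 0 := by
  ext i
  simp [ptail, e0, EuclideanSpace.single_apply, Fin.succ_ne_zero]

lemma sub_apply0 {m : ℕ} (z w : Esp (m+2)) : (z - w) 0 = z 0 - w 0 := rfl

lemma ptail_sub' {n : ℕ} (z w : Esp (n+1)) : ptail (z - w) = ptail z - ptail w := by
  ext i; simp [ptail]

lemma cap_geom (m : ℕ) {z : Esp (m+2)} (hz : ‖z‖ = 1) :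
    ‖z - e0 m‖ ^ 2 = 2 - 2 * (z 0) := by
  have h1 := norm_decomp (z - e0 m)
  rw [sub_apply0, e0_zero, ptail_sub', ptail_e0, sub_zero] at h1
  have h2 := norm_decomp z
  rw [hz] at h2
  nlinarith

lemma cap_center (m : ℕ) {z₀ : Esp (m+2)} (hz₀ : ‖z₀‖ = 1) {r : ℝ} (hr : 0 ≤ r) (hr1 : r ≤ 1) :
    μH[((m+1 : ℕ):ℝ)] (sphere (0 : Esp (m+2)) 1 ∩ closedBall z₀ r)
      ≤ ENNReal.ofReal (4^(m+1)) * (ENNReal.ofReal (r^(m+1)) * kap (m+1)) := by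
  rw [rot_meas hz₀ (norm_e0 m) r (by positivity)]
  have hsub : sphere (0 : Esp (m+2)) 1 ∩ closedBall (e0 m) r
      ⊆ {z : Esp (m+2) | ‖z‖ = 1 ∧ (1/2 : ℝ) ≤ z 0 ∧ ‖ptail z‖ ≤ r} := by
    rintro z ⟨hz1, hz2⟩
    rw [mem_sphere_zero_iff_norm] at hz1
    rw [mem_closedBall, dist_eq_norm] at hz2
    have hgeom := cap_geom m hz1
    have hle : ‖z - e0 m‖^2 ≤ r^2 := by
      have := pow_le_pow_left₀ (norm_nonneg _) hz2 2
      linarith [this]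
    have hz0 : (1/2 : ℝ) ≤ z 0 := by nlinarith
    refine ⟨hz1, hz0, ?_⟩
    have h1 := norm_decomp (z - e0 m)
    rw [sub_apply0, e0_zero, ptail_sub', ptail_e0, sub_zero] at h1
    refine le_of_sq_le_sq' hr ?_ (norm_nonneg _)
    nlinarith [sq_nonneg (z 0 - 1)]
  calc μH[((m+1 : ℕ):ℝ)] (sphere (0 : Esp (m+2)) 1 ∩ closedBall (e0 m) r)
      ≤ μH[((m+1 : ℕ):ℝ)] {z : Esp (m+2) | ‖z‖ = 1 ∧ (1/2:ℝ) ≤ z 0 ∧ ‖ptail z‖ ≤ r} :=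
        measure_mono hsub
    _ ≤ ENNReal.ofReal ((2/(1/2:ℝ))^(m+1)) * (ENNReal.ofReal (r^(m+1)) * kap (m+1)) :=
        graph_bound m (by norm_num) (by norm_num) hr
    _ = ENNReal.ofReal (4^(m+1)) * (ENNReal.ofReal (r^(m+1)) * kap (m+1)) := by norm_num

lemma cap_lower (m : ℕ) {z₀ : Esp (m+2)} (hz₀ : ‖z₀‖ = 1) {ρ : ℝ} (hρ : 0 < ρ) (hρ1 : ρ ≤ 1) :
    ENNReal.ofReal ((ρ/2)^(m+1)) * kap (m+1)
      ≤ μH[((m+1 : ℕ):ℝ)] (sphere (0 : Esp (m+2)) 1 ∩ closedBall z₀ ρ) := by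
  rw [rot_meas hz₀ (norm_e0 m) ρ (by positivity)]
  have hsub : closedBall (0 : Esp (m+1)) (ρ/2)
      ⊆ ptail '' (sphere (0 : Esp (m+2)) 1 ∩ closedBall (e0 m) ρ) := by
    intro y hy
    rw [mem_closedBall_zero_iff] at hy
    have hy1 : ‖y‖ ≤ 1/2 := le_trans hy (by linarith)
    have hy2 : (0:ℝ) ≤ 1 - ‖y‖^2 := by nlinarith [norm_nonneg y]
    set a := Real.sqrt (1 - ‖y‖^2) with ha
    have ha2 : a^2 = 1 - ‖y‖^2 := Real.sq_sqrt hy2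
    have ha0 : 0 ≤ a := Real.sqrt_nonneg _
    have hale : a ≤ 1 := by nlinarith [norm_nonneg y]
    have hage : 1/2 ≤ a := by
      rw [ha]
      calc (1/2 : ℝ) = Real.sqrt (1/4) := by
            rw [show (1/4 : ℝ) = (1/2)^2 by norm_num, Real.sqrt_sq (by norm_num)]
        _ ≤ _ := Real.sqrt_le_sqrt (by nlinarith [norm_nonneg y, hy1])
    refine ⟨pcons a y, ⟨?_, ?_⟩, ptail_pcons a y⟩
    · rw [mem_sphere_zero_iff_norm]
      have hn := norm_pcons_sq a y
      rw [ha2] at hn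
      have : ‖pcons a y‖^2 = 1 := by linarith
      nlinarith [norm_nonneg (pcons a y)]
    · rw [mem_closedBall, dist_eq_norm]
      have hsubeq : pcons a y - e0 m = pcons (a - 1) y := by
        have : e0 m = pcons ((e0 m) 0) (ptail (e0 m)) := (pcons_self _).symm
        rw [this, e0_zero, ptail_e0, pcons_sub, sub_zero]
      rw [hsubeq]
      refine le_of_sq_le_sq' hρ.le ?_ (norm_nonneg _)
      rw [norm_pcons_sq]
      have h1a : 1 - a ≤ ‖y‖^2 := by nlinarith
      nlinarith [sq_nonneg (1-a), norm_nonneg y, sq_nonneg ‖y‖]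
  calc ENNReal.ofReal ((ρ/2)^(m+1)) * kap (m+1)
      = μH[((m+1 : ℕ):ℝ)] (closedBall (0 : Esp (m+1)) (ρ/2)) :=
        (ball_meas (m+1) (by positivity) _).symm
    _ ≤ μH[((m+1 : ℕ):ℝ)] (ptail '' (sphere (0 : Esp (m+2)) 1 ∩ closedBall (e0 m) ρ)) :=
        measure_mono hsub
    _ ≤ ((1:ℝ≥0) : ℝ≥0∞)^(((m+1:ℕ)):ℝ) *
          μH[((m+1 : ℕ):ℝ)] (sphere (0 : Esp (m+2)) 1 ∩ closedBall (e0 m) ρ) :=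
        lip_ptail.hausdorffMeasure_image_le (by positivity) _
    _ = μH[((m+1 : ℕ):ℝ)] (sphere (0 : Esp (m+2)) 1 ∩ closedBall (e0 m) ρ) := by
        rw [ENNReal.coe_one, ENNReal.one_rpow, one_mul]

lemma sphere_fin (m : ℕ) : μH[((m+1 : ℕ):ℝ)] (sphere (0 : Esp (m+2)) 1) < ⊤ := by
  have hcomp : IsCompact (sphere (0 : Esp (m+2)) 1) := isCompact_sphere _ _
  obtain ⟨b', hb's, hb'fin, hcov⟩ :=
    hcomp.elim_finite_subcover_image
      (fun z (_ : z ∈ sphere (0:Esp (m+2)) 1) => (isOpen_ball : IsOpen (ball z (1/2))))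
      (fun z hz => mem_biUnion hz (mem_ball_self (by norm_num : (0:ℝ) < 1/2)))
  have hsub : sphere (0 : Esp (m+2)) 1
      ⊆ ⋃ z ∈ b', (sphere (0 : Esp (m+2)) 1 ∩ closedBall z (1/2)) := by
    intro w hw
    obtain ⟨z, hz, hwz⟩ := by simpa using hcov hw
    refine mem_biUnion hz ⟨hw, ?_⟩
    rw [mem_closedBall]
    have : dist w z ≤ 2⁻¹ := le_of_lt hwz
    linarith
  refine lt_of_le_of_lt (measure_mono hsub) ?_
  refine measure_biUnion_lt_top hb'fin (fun z hz => ?_)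
  refine lt_of_le_of_lt
    (cap_center m (mem_sphere_zero_iff_norm.mp (hb's hz)) (by norm_num) (by norm_num)) ?_
  exact ENNReal.mul_lt_top ENNReal.ofReal_lt_top
    (ENNReal.mul_lt_top ENNReal.ofReal_lt_top (kap_lt_top _))

lemma capAll (m : ℕ) (x : Esp (m+2)) {r : ℝ} (hr : 0 ≤ r) :
    μH[((m+1 : ℕ):ℝ)] (sphere (0 : Esp (m+2)) 1 ∩ closedBall x r)
      ≤ (ENNReal.ofReal (8^(m+1)) * kap (m+1)
          + ENNReal.ofReal (2^(m+1)) * μH[((m+1 : ℕ):ℝ)] (sphere (0 : Esp (m+2)) 1))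
        * ENNReal.ofReal (r^(m+1)) := by
  rcases Set.eq_empty_or_nonempty (sphere (0 : Esp (m+2)) 1 ∩ closedBall x r) with he | hne
  · rw [he]; simp
  obtain ⟨z₀, hz₀s, hz₀b⟩ := hne
  have hz₀ : ‖z₀‖ = 1 := mem_sphere_zero_iff_norm.mp hz₀s
  have hsub : sphere (0 : Esp (m+2)) 1 ∩ closedBall x r
      ⊆ sphere (0 : Esp (m+2)) 1 ∩ closedBall z₀ (2*r) := by
    rintro w ⟨hw1, hw2⟩
    refine ⟨hw1, ?_⟩
    rw [mem_closedBall] at *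
    calc dist w z₀ ≤ dist w x + dist x z₀ := dist_triangle _ _ _
      _ ≤ r + r := add_le_add hw2 (by rw [dist_comm]; exact hz₀b)
      _ = 2*r := by ring
  rcases le_or_gt (2*r) 1 with hsmall | hbig
  · refine le_trans (measure_mono hsub) (le_trans
      (cap_center m hz₀ (by positivity) hsmall) ?_)
    have heq : ENNReal.ofReal ((4:ℝ)^(m+1)) * (ENNReal.ofReal ((2*r)^(m+1)) * kap (m+1))
        = (ENNReal.ofReal ((8:ℝ)^(m+1)) * kap (m+1)) * ENNReal.ofReal (r^(m+1)) := by
      rw [← mul_assoc, ← ENNReal.ofReal_mul (by positivity),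
        show (4:ℝ)^(m+1)*((2*r)^(m+1)) = (8^(m+1))*(r^(m+1)) by
          rw [mul_pow, ← mul_assoc, ← mul_pow]; norm_num,
        ENNReal.ofReal_mul (by positivity)]
      ring
    rw [heq]
    exact mul_le_mul_left le_self_add _
  · have h1 : (1:ℝ) ≤ (2*r)^(m+1) := one_le_pow₀ (by linarith)
    calc μH[((m+1 : ℕ):ℝ)] (sphere (0 : Esp (m+2)) 1 ∩ closedBall x r)
        ≤ μH[((m+1 : ℕ):ℝ)] (sphere (0 : Esp (m+2)) 1) :=
          measure_mono inter_subset_left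
      _ = 1 * μH[((m+1 : ℕ):ℝ)] (sphere (0 : Esp (m+2)) 1) := (one_mul _).symm
      _ ≤ ENNReal.ofReal ((2*r)^(m+1)) * μH[((m+1 : ℕ):ℝ)] (sphere (0 : Esp (m+2)) 1) := by
          gcongr
          rw [show (1:ℝ≥0∞) = ENNReal.ofReal 1 from (ENNReal.ofReal_one).symm]
          exact ENNReal.ofReal_le_ofReal h1
      _ = (ENNReal.ofReal ((2:ℝ)^(m+1)) * μH[((m+1 : ℕ):ℝ)] (sphere (0 : Esp (m+2)) 1))
            * ENNReal.ofReal (r^(m+1)) := by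
          rw [mul_pow, ENNReal.ofReal_mul (by positivity)]
          ring
      _ ≤ _ := by
          apply mul_le_mul_left
          exact le_add_of_nonneg_of_le zero_le le_rfl


lemma bernoulli_aux {a b t : ℝ} (ha : 0 < a) (hab : a ≤ b) (ht : 0 < t) :
    1 - Real.exp (-(b*t)) ≤ (b/a) * (1 - Real.exp (-(a*t))) := by
  have hu : Real.exp (-(a*t)) ∈ Set.Ioo (0:ℝ) 1 := by
    constructor
    · exact Real.exp_pos _
    · rw [Real.exp_lt_one_iff]
      nlinarith
  set u := Real.exp (-(a*t)) with hu'
  have hp : (1:ℝ) ≤ b/a := (one_le_div ha).mpr hab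
  have hbern := one_add_mul_self_le_rpow_one_add (by nlinarith [hu.1] : (-1:ℝ) ≤ u - 1) hp
  have hupow : (1 + (u - 1)) ^ (b/a) = Real.exp (-(b*t)) := by
    have h1 : (1:ℝ) + (u - 1) = u := by ring
    rw [h1, hu', ← Real.exp_mul]
    congr 1
    field_simp
  rw [hupow] at hbern
  have h2 : 1 + (b/a) * (u - 1) ≤ Real.exp (-(b*t)) := hbern
  nlinarith

section phiprops
variable {φ : ℝ → ℝ} {μ : Measure ℝ}
  (hint : ∀ l > (0 : ℝ), IntegrableOn (fun t => 1 - Real.exp (-(l * t))) (Ioi 0) μ)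
  (hφ : ∀ l > (0 : ℝ), φ l = ∫ t in Ioi (0 : ℝ), (1 - Real.exp (-(l * t))) ∂μ)

include hint hφ

lemma phi_pos (hμne : μ (Ioi (0 : ℝ)) ≠ 0) {l : ℝ} (hl : 0 < l) : 0 < φ l := by
  rw [hφ l hl]
  have hnn : 0 ≤ᵐ[μ.restrict (Ioi 0)] fun t => 1 - Real.exp (-(l * t)) := by
    refine (ae_restrict_iff' measurableSet_Ioi).2 (ae_of_all _ fun t ht => ?_)
    have h1 : Real.exp (-(l*t)) ≤ 1 := by
      rw [Real.exp_le_one_iff]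
      rw [mem_Ioi] at ht
      nlinarith
    exact sub_nonneg.mpr h1
  rw [setIntegral_pos_iff_support_of_nonneg_ae hnn (hint l hl)]
  have hsup : Ioi (0:ℝ) ⊆ Function.support fun t => 1 - Real.exp (-(l * t)) := by
    intro t ht
    rw [mem_Ioi] at ht
    have : Real.exp (-(l*t)) < 1 := by
      rw [Real.exp_lt_one_iff]; nlinarith
    simp only [Function.mem_support]
    intro hcon
    nlinarith
  exact lt_of_lt_of_le hμne.bot_lt (measure_mono fun t ht => ⟨hsup ht, ht⟩)

lemma phi_mono {a b : ℝ} (ha : 0 < a) (hab : a ≤ b) : φ a ≤ φ b := by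
  rw [hφ a ha, hφ b (lt_of_lt_of_le ha hab)]
  refine setIntegral_mono_on (hint a ha) (hint b (lt_of_lt_of_le ha hab))
    measurableSet_Ioi (fun t ht => ?_)
  rw [mem_Ioi] at ht
  have : Real.exp (-(b*t)) ≤ Real.exp (-(a*t)) := by
    apply Real.exp_le_exp.mpr
    nlinarith
  linarith

lemma phi_scale {a b : ℝ} (ha : 0 < a) (hab : a ≤ b) : φ b ≤ (b/a) * φ a := by
  have hb : 0 < b := lt_of_lt_of_le ha hab
  rw [hφ a ha, hφ b hb, ← integral_const_mul]
  refine setIntegral_mono_on (hint b hb) ?_ measurableSet_Ioi (fun t ht => ?_)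
  · exact (hint a ha).const_mul _
  · exact bernoulli_aux ha hab (mem_Ioi.mp ht)

end phiprops

lemma dyadic (m : ℕ) (x : Esp (m+2)) {δ : ℝ} (hδ : 0 < δ)
    (hlow : ∀ z ∈ sphere (0:Esp (m+2)) 1, δ ≤ ‖x - z‖) :
    ∫⁻ z in sphere (0:Esp (m+2)) 1, ENNReal.ofReal ((‖x - z‖⁻¹) ^ (m+2)) ∂μH[((m+1:ℕ):ℝ)]
      ≤ (ENNReal.ofReal (8^(m+1)) * kap (m+1)
          + ENNReal.ofReal (2^(m+1)) * μH[((m+1:ℕ):ℝ)] (sphere (0 : Esp (m+2)) 1))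
        * (ENNReal.ofReal (2^(m+1) * δ⁻¹) * 2) := by
  set AA := ENNReal.ofReal ((8:ℝ)^(m+1)) * kap (m+1)
      + ENNReal.ofReal ((2:ℝ)^(m+1)) * μH[((m+1:ℕ):ℝ)] (sphere (0 : Esp (m+2)) 1) with hAA
  set A : ℕ → Set (Esp (m+2)) := fun n =>
    sphere (0:Esp (m+2)) 1 ∩ {z | 2^n*δ ≤ ‖x-z‖ ∧ ‖x-z‖ < 2^(n+1)*δ} with hA
  have hcont : Continuous fun z : Esp (m+2) => ‖x - z‖ := (continuous_const.sub continuous_id).norm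
  have hAmeas : ∀ n, MeasurableSet (A n) := by
    intro n
    exact (isClosed_sphere).measurableSet.inter
      ((measurableSet_le measurable_const hcont.measurable).inter
        (measurableSet_lt hcont.measurable measurable_const))
  have hcover : sphere (0:Esp (m+2)) 1 ⊆ ⋃ n, A n := by
    intro z hz
    have hzd : δ ≤ ‖x - z‖ := hlow z hz
    have hex : ∃ n : ℕ, ‖x - z‖ < 2^(n+1)*δ := by
      obtain ⟨n, hn⟩ := pow_unbounded_of_one_lt (‖x - z‖/δ) (one_lt_two (α := ℝ))
      refine ⟨n, ?_⟩
      rw [div_lt_iff₀ hδ] at hn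
      have : (2:ℝ)^n ≤ 2^(n+1) := by
        apply pow_le_pow_right₀ (by norm_num)
        omega
      nlinarith
    set N := Nat.find hex with hN
    have hN1 : ‖x - z‖ < 2^(N+1)*δ := Nat.find_spec hex
    have hN2 : 2^N*δ ≤ ‖x - z‖ := by
      rcases Nat.eq_zero_or_pos N with h0 | hpos
      · rw [h0]; simpa using hzd
      · obtain ⟨k, hk⟩ := Nat.exists_eq_succ_of_ne_zero hpos.ne'
        have := Nat.find_min hex (m := k) (by omega)
        push_neg at this
        rw [hk]
        simpa [Nat.succ_eq_add_one] using this
    exact mem_iUnion.mpr ⟨N, hz, hN2, hN1⟩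
  have hAsub : ∀ n, A n ⊆ sphere (0:Esp (m+2)) 1 ∩ closedBall x (2^(n+1)*δ) := by
    rintro n z ⟨hz1, hz2, hz3⟩
    refine ⟨hz1, ?_⟩
    rw [mem_closedBall, dist_comm, dist_eq_norm]
    exact hz3.le
  -- pointwise bound on A n
  have hpt : ∀ n, ∀ z ∈ A n,
      ENNReal.ofReal ((‖x - z‖⁻¹) ^ (m+2)) ≤ ENNReal.ofReal ((((2:ℝ)^n*δ)⁻¹) ^ (m+2)) := by
    rintro n z ⟨hz1, hz2, hz3⟩
    apply ENNReal.ofReal_le_ofReal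
    have h2 : (0:ℝ) < 2^n*δ := by positivity
    apply pow_le_pow_left₀ (by positivity)
    exact inv_anti₀ h2 hz2
  -- key real identity
  have key : ∀ n : ℕ, (((2:ℝ)^n*δ)⁻¹)^(m+2) * ((2:ℝ)^(n+1)*δ)^(m+1)
      = (2^(m+1) * δ⁻¹) * ((1/2:ℝ))^n := by
    intro n
    have h2 : (2:ℝ)^n ≠ 0 := by positivity
    have hδ' : δ ≠ 0 := hδ.ne'
    rw [inv_pow, one_div, inv_pow]
    field_simp
    ring
  calc ∫⁻ z in sphere (0:Esp (m+2)) 1, ENNReal.ofReal ((‖x - z‖⁻¹) ^ (m+2)) ∂μH[((m+1:ℕ):ℝ)]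
      ≤ ∫⁻ z in ⋃ n, A n, ENNReal.ofReal ((‖x - z‖⁻¹) ^ (m+2)) ∂μH[((m+1:ℕ):ℝ)] :=
        lintegral_mono_set hcover
    _ ≤ ∑' n, ∫⁻ z in A n, ENNReal.ofReal ((‖x - z‖⁻¹) ^ (m+2)) ∂μH[((m+1:ℕ):ℝ)] :=
        lintegral_iUnion_le _ _
    _ ≤ ∑' n, ENNReal.ofReal ((((2:ℝ)^n*δ)⁻¹) ^ (m+2)) * (AA * ENNReal.ofReal ((2^(n+1)*δ)^(m+1))) := by
        apply ENNReal.tsum_le_tsum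
        intro n
        calc ∫⁻ z in A n, ENNReal.ofReal ((‖x - z‖⁻¹) ^ (m+2)) ∂μH[((m+1:ℕ):ℝ)]
            ≤ ∫⁻ _ in A n, ENNReal.ofReal ((((2:ℝ)^n*δ)⁻¹) ^ (m+2)) ∂μH[((m+1:ℕ):ℝ)] := by
              apply lintegral_mono_ae
              exact (ae_restrict_iff' (hAmeas n)).2 (ae_of_all _ (hpt n))
          _ = ENNReal.ofReal ((((2:ℝ)^n*δ)⁻¹) ^ (m+2)) * μH[((m+1:ℕ):ℝ)] (A n) :=
              setLIntegral_const _ _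
          _ ≤ ENNReal.ofReal ((((2:ℝ)^n*δ)⁻¹) ^ (m+2)) * (AA * ENNReal.ofReal ((2^(n+1)*δ)^(m+1))) := by
              apply mul_le_mul_right
              exact le_trans (measure_mono (hAsub n)) (capAll m x (by positivity))
    _ = ∑' n, AA * (ENNReal.ofReal ((2:ℝ)^(m+1) * δ⁻¹) * ENNReal.ofReal ((1/2:ℝ))^n) := by
        congr 1
        funext n
        rw [← ENNReal.ofReal_pow (by norm_num : (0:ℝ) ≤ 1/2),
          ← ENNReal.ofReal_mul (by positivity : (0:ℝ) ≤ 2^(m+1) * δ⁻¹), ← key n,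
          ENNReal.ofReal_mul (by positivity : (0:ℝ) ≤ (((2:ℝ)^n*δ)⁻¹)^(m+2))]
        ring
    _ = AA * (ENNReal.ofReal ((2:ℝ)^(m+1) * δ⁻¹) * ∑' n, ENNReal.ofReal ((1/2:ℝ))^n) := by
        rw [ENNReal.tsum_mul_left, ENNReal.tsum_mul_left]
    _ ≤ AA * (ENNReal.ofReal ((2:ℝ)^(m+1) * δ⁻¹) * 2) := by
        apply mul_le_mul_right
        apply mul_le_mul_right
        have : ENNReal.ofReal ((1/2:ℝ)) = 2⁻¹ := by
          rw [show (1/2:ℝ) = (2:ℝ)⁻¹ by norm_num]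
          rw [ENNReal.ofReal_inv_of_pos (by norm_num)]
          norm_num
        rw [this, ENNReal.tsum_geometric, ENNReal.one_sub_inv_two, inv_inv]

end PoissonAux

/-- If `φ` is a Bernstein function without drift and `P` satisfies the
sharp Poisson kernel estimate for `φ` on the unit ball `B ⊂ ℝ^d`, then
`∫_{∂B} P(x,z) σ(dz) ≍ δ(x)^{−2} φ(δ(x)^{−2})^{−1}` with a comparison constant
depending only on `d`, `φ` and `c₀`. -/
theorem poisson_integral_sharp_bound (d : ℕ) (hd : 2 ≤ d)
    (φ : ℝ → ℝ) (μ : Measure ℝ)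
    (hμne : μ (Ioi (0 : ℝ)) ≠ 0)
    (hμfin : ∫⁻ t in Ioi (0 : ℝ), ENNReal.ofReal (min 1 t) ∂μ < ⊤)
    (hint : ∀ l > (0 : ℝ), IntegrableOn (fun t => 1 - Real.exp (-(l * t))) (Ioi 0) μ)
    (hφ : ∀ l > (0 : ℝ), φ l = ∫ t in Ioi (0 : ℝ), (1 - Real.exp (-(l * t))) ∂μ)
    (P : EuclideanSpace ℝ (Fin d) → EuclideanSpace ℝ (Fin d) → ℝ)
    (hPmeas : Measurable (Function.uncurry P))
    (c₀ : ℝ) (hc₀ : 1 ≤ c₀)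
    (hP : ∀ x ∈ Metric.ball (0 : EuclideanSpace ℝ (Fin d)) 1,
      ∀ z ∈ Metric.sphere (0 : EuclideanSpace ℝ (Fin d)) 1,
        c₀⁻¹ * ((1 - ‖x‖) / (‖x - z‖ ^ (d + 2) * φ (1 / ‖x - z‖ ^ 2))) ≤ P x z ∧
        P x z ≤ c₀ * ((1 - ‖x‖) / (‖x - z‖ ^ (d + 2) * φ (1 / ‖x - z‖ ^ 2)))) :
    ∃ C : ℝ, 1 ≤ C ∧
      ∀ x ∈ Metric.ball (0 : EuclideanSpace ℝ (Fin d)) 1,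
        C⁻¹ * ((1 - ‖x‖) ^ 2 * φ (1 / (1 - ‖x‖) ^ 2))⁻¹ ≤
          (∫ z in Metric.sphere (0 : EuclideanSpace ℝ (Fin d)) 1,
            P x z ∂(μH[((d : ℝ) - 1)])) ∧
        (∫ z in Metric.sphere (0 : EuclideanSpace ℝ (Fin d)) 1,
            P x z ∂(μH[((d : ℝ) - 1)])) ≤
          C * ((1 - ‖x‖) ^ 2 * φ (1 / (1 - ‖x‖) ^ 2))⁻¹ := by
  obtain ⟨m, rfl⟩ : ∃ m, d = m + 2 := ⟨d - 2, by omega⟩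
  have hexp : ((m + 2 : ℕ) : ℝ) - 1 = ((m + 1 : ℕ) : ℝ) := by push_cast; ring
  rw [hexp]
  have hc₀0 : (0:ℝ) < c₀ := lt_of_lt_of_le one_pos hc₀
  -- constants
  set AAT : ℝ := (ENNReal.ofReal ((8:ℝ)^(m+1)) * kap (m+1)
      + ENNReal.ofReal ((2:ℝ)^(m+1))
        * μH[((m+1:ℕ):ℝ)] (sphere (0 : EuclideanSpace ℝ (Fin (m+2))) 1)).toReal with hAAT
  have hAAne : (ENNReal.ofReal ((8:ℝ)^(m+1)) * kap (m+1)
      + ENNReal.ofReal ((2:ℝ)^(m+1))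
        * μH[((m+1:ℕ):ℝ)] (sphere (0 : EuclideanSpace ℝ (Fin (m+2))) 1)) ≠ ⊤ := by
    apply ENNReal.add_ne_top.2
    constructor
    · exact (ENNReal.mul_lt_top ENNReal.ofReal_lt_top (kap_lt_top _)).ne
    · exact (ENNReal.mul_lt_top ENNReal.ofReal_lt_top (sphere_fin m)).ne
  have hAAT0 : 0 ≤ AAT := ENNReal.toReal_nonneg
  set κT : ℝ := (kap (m+1)).toReal with hκT
  have hκT0 : 0 < κT := ENNReal.toReal_pos (kap_pos _).ne' (kap_lt_top _).ne
  set cUp : ℝ := c₀ * 2^(m+2) * AAT with hcUp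
  set cLow : ℝ := c₀⁻¹ * κT / 4^(2*m+5) with hcLow
  have hcLow0 : 0 < cLow := by rw [hcLow]; positivity
  set C : ℝ := max cUp (max cLow⁻¹ 1) with hC
  have hC1 : (1:ℝ) ≤ C := le_trans (le_max_right _ _) (le_max_right _ _)
  have hCUp : cUp ≤ C := le_max_left _ _
  have hCinv : C⁻¹ ≤ cLow := by
    have h1 : cLow⁻¹ ≤ C := le_trans (le_max_left _ _) (le_max_right _ _)
    have h2 := inv_anti₀ (inv_pos.mpr hcLow0) h1
    rwa [inv_inv] at h2
  refine ⟨C, hC1, fun x hx => ?_⟩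
  have hx1 : ‖x‖ < 1 := mem_ball_zero_iff.mp hx
  have hx0 : (0:ℝ) ≤ ‖x‖ := norm_nonneg x
  set δ : ℝ := 1 - ‖x‖ with hδdef
  have hδ0 : 0 < δ := by rw [hδdef]; linarith
  have hδ1 : δ ≤ 1 := by rw [hδdef]; linarith
  set φδ : ℝ := φ (1/δ^2) with hφδdef
  have hφδ : 0 < φδ := phi_pos hint hφ hμne (by positivity)
  have hSmeas : MeasurableSet (sphere (0 : EuclideanSpace ℝ (Fin (m+2))) 1) :=
    (isClosed_sphere).measurableSet
  have hwlow : ∀ z ∈ sphere (0 : EuclideanSpace ℝ (Fin (m+2))) 1, δ ≤ ‖x - z‖ := by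
    intro z hz
    rw [mem_sphere_zero_iff_norm] at hz
    have h := norm_sub_norm_le z x
    rw [hz] at h
    rw [norm_sub_rev]
    rw [hδdef]; linarith
  have hwhigh : ∀ z ∈ sphere (0 : EuclideanSpace ℝ (Fin (m+2))) 1, ‖x - z‖ ≤ 2 := by
    intro z hz
    rw [mem_sphere_zero_iff_norm] at hz
    have h := norm_sub_le x z
    rw [hz] at h; linarith
  have hphis : ∀ z ∈ sphere (0 : EuclideanSpace ℝ (Fin (m+2))) 1,
      0 < φ (1/‖x-z‖^2) ∧ φ (1/‖x-z‖^2) ≤ φδ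
        ∧ δ^2/‖x-z‖^2 * φδ ≤ φ (1/‖x-z‖^2) := by
    intro z hz
    have hw := hwlow z hz
    have hw0 : 0 < ‖x-z‖ := lt_of_lt_of_le hδ0 hw
    have ha : 0 < 1/‖x-z‖^2 := by positivity
    have hab : 1/‖x-z‖^2 ≤ 1/δ^2 := by
      apply one_div_le_one_div_of_le (by positivity)
      exact pow_le_pow_left₀ hδ0.le hw 2
    refine ⟨phi_pos hint hφ hμne ha, ?_, ?_⟩
    · rw [hφδdef]; exact phi_mono hint hφ ha hab
    · have hsc := phi_scale hint hφ ha hab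
      have heq : (1/δ^2)/(1/‖x-z‖^2) = ‖x-z‖^2/δ^2 := by
        field_simp
      rw [heq] at hsc
      have h2 : δ^2/‖x-z‖^2 * φδ ≤ δ^2/‖x-z‖^2 * (‖x-z‖^2/δ^2 * φ (1/‖x-z‖^2)) := by
        apply mul_le_mul_of_nonneg_left _ (by positivity)
        rw [hφδdef]; exact hsc
      refine le_trans h2 (le_of_eq ?_)
      field_simp
  have hPnn : ∀ z ∈ sphere (0 : EuclideanSpace ℝ (Fin (m+2))) 1, 0 ≤ P x z := by
    intro z hz
    refine le_trans ?_ (hP x hx z hz).1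
    have hw0 : 0 < ‖x-z‖ := lt_of_lt_of_le hδ0 (hwlow z hz)
    have hφw := (hphis z hz).1
    apply mul_nonneg (inv_nonneg.mpr hc₀0.le)
    apply div_nonneg (by linarith)
    exact mul_nonneg (by positivity) hφw.le
  have hPz : Measurable (fun z => P x z) := hPmeas.of_uncurry_left
  have hnnae : 0 ≤ᵐ[(μH[((m+1:ℕ):ℝ)] :
      Measure (EuclideanSpace ℝ (Fin (m+2)))).restrict
        (sphere (0 : EuclideanSpace ℝ (Fin (m+2))) 1)] fun z => P x z :=
    (ae_restrict_iff' hSmeas).2 (ae_of_all _ fun z hz => hPnn z hz)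
  -- pointwise upper bound
  have hup : ∀ z ∈ sphere (0 : EuclideanSpace ℝ (Fin (m+2))) 1,
      P x z ≤ (c₀/(δ*φδ)) * (‖x-z‖⁻¹)^(m+2) := by
    intro z hz
    obtain ⟨hφw, hφle, hφge⟩ := hphis z hz
    have h2 := (hP x hx z hz).2
    rw [← hδdef] at h2
    have hw0 : 0 < ‖x - z‖ := lt_of_lt_of_le hδ0 (hwlow z hz)
    refine le_trans h2 ?_
    have hstep : c₀ * (δ / (‖x-z‖^(m+2+2) * φ (1/‖x-z‖^2)))
        ≤ c₀ * (δ / (‖x-z‖^(m+2+2) * (δ^2/‖x-z‖^2 * φδ))) := by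
      apply mul_le_mul_of_nonneg_left _ hc₀0.le
      apply div_le_div_of_nonneg_left hδ0.le
      · positivity
      · exact mul_le_mul_of_nonneg_left hφge (by positivity)
    refine le_trans hstep (le_of_eq ?_)
    have hw' : ‖x-z‖ ≠ 0 := hw0.ne'
    have hδ' : δ ≠ 0 := hδ0.ne'
    have hφδ' : φδ ≠ 0 := hφδ.ne'
    rw [inv_pow]
    field_simp
    ring
  -- the lintegral bound
  have hlint : ∫⁻ z in sphere (0 : EuclideanSpace ℝ (Fin (m+2))) 1,
        ENNReal.ofReal (P x z) ∂μH[((m+1:ℕ):ℝ)]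
      ≤ ENNReal.ofReal (c₀/(δ*φδ))
        * ((ENNReal.ofReal ((8:ℝ)^(m+1)) * kap (m+1)
            + ENNReal.ofReal ((2:ℝ)^(m+1))
              * μH[((m+1:ℕ):ℝ)] (sphere (0 : EuclideanSpace ℝ (Fin (m+2))) 1))
          * (ENNReal.ofReal (2^(m+1) * δ⁻¹) * 2)) := by
    calc ∫⁻ z in sphere (0 : EuclideanSpace ℝ (Fin (m+2))) 1,
          ENNReal.ofReal (P x z) ∂μH[((m+1:ℕ):ℝ)]
        ≤ ∫⁻ z in sphere (0 : EuclideanSpace ℝ (Fin (m+2))) 1,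
            ENNReal.ofReal (c₀/(δ*φδ)) * ENNReal.ofReal ((‖x-z‖⁻¹)^(m+2)) ∂μH[((m+1:ℕ):ℝ)] := by
          apply lintegral_mono_ae
          refine (ae_restrict_iff' hSmeas).2 (ae_of_all _ fun z hz => ?_)
          rw [← ENNReal.ofReal_mul (div_nonneg hc₀0.le (mul_nonneg hδ0.le hφδ.le))]
          exact ENNReal.ofReal_le_ofReal (hup z hz)
      _ = ENNReal.ofReal (c₀/(δ*φδ)) * ∫⁻ z in sphere (0 : EuclideanSpace ℝ (Fin (m+2))) 1,
            ENNReal.ofReal ((‖x-z‖⁻¹)^(m+2)) ∂μH[((m+1:ℕ):ℝ)] :=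
          lintegral_const_mul' _ _ ENNReal.ofReal_ne_top
      _ ≤ _ := mul_le_mul_right (dyadic m x hδ0 hwlow) _
  have hMne : ENNReal.ofReal (c₀/(δ*φδ))
        * ((ENNReal.ofReal ((8:ℝ)^(m+1)) * kap (m+1)
            + ENNReal.ofReal ((2:ℝ)^(m+1))
              * μH[((m+1:ℕ):ℝ)] (sphere (0 : EuclideanSpace ℝ (Fin (m+2))) 1))
          * (ENNReal.ofReal (2^(m+1) * δ⁻¹) * 2)) ≠ ⊤ := by
    apply (ENNReal.mul_lt_top ENNReal.ofReal_lt_top _).ne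
    apply ENNReal.mul_lt_top (lt_top_iff_ne_top.mpr hAAne)
    exact ENNReal.mul_lt_top ENNReal.ofReal_lt_top (by norm_num)
  have hIntS : IntegrableOn (fun z => P x z)
      (sphere (0 : EuclideanSpace ℝ (Fin (m+2))) 1) μH[((m+1:ℕ):ℝ)] := by
    refine ⟨hPz.aestronglyMeasurable, ?_⟩
    rw [hasFiniteIntegral_iff_ofReal hnnae]
    exact lt_of_le_of_lt hlint (lt_top_iff_ne_top.mpr hMne)
  have hieq : ∫ z in sphere (0 : EuclideanSpace ℝ (Fin (m+2))) 1, P x z ∂μH[((m+1:ℕ):ℝ)]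
      = (∫⁻ z in sphere (0 : EuclideanSpace ℝ (Fin (m+2))) 1,
          ENNReal.ofReal (P x z) ∂μH[((m+1:ℕ):ℝ)]).toReal :=
    integral_eq_lintegral_of_nonneg_ae hnnae hPz.aestronglyMeasurable
  constructor
  · -- LOWER BOUND
    -- construct the cap
    obtain ⟨z₀, ρ, hz₀, hρ0, hρ1, hρδ, hcapw⟩ : ∃ (z₀ : EuclideanSpace ℝ (Fin (m+2))) (ρ : ℝ),
        ‖z₀‖ = 1 ∧ 0 < ρ ∧ ρ ≤ 1 ∧ δ/2 ≤ ρ ∧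
          ∀ z ∈ sphere (0 : EuclideanSpace ℝ (Fin (m+2))) 1 ∩ closedBall z₀ ρ,
            ‖x - z‖ ≤ 4*δ := by
      rcases le_or_gt (1/2 : ℝ) ‖x‖ with hbig | hsmall
      · have hxne : ‖x‖ ≠ 0 := by intro h; rw [h] at hbig; norm_num at hbig
        refine ⟨‖x‖⁻¹ • x, δ, ?_, hδ0, hδ1, by linarith, ?_⟩
        · rw [norm_smul, norm_inv, norm_norm]
          field_simp
        · have hxz₀ : ‖x - ‖x‖⁻¹ • x‖ = δ := by
            have h1 : x - ‖x‖⁻¹ • x = (1 - ‖x‖⁻¹) • x := by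
              rw [sub_smul, one_smul]
            rw [h1, norm_smul, Real.norm_eq_abs]
            have hinv1 : 1 ≤ ‖x‖⁻¹ := by
              rw [le_inv_comm₀ one_pos (lt_of_lt_of_le (by norm_num) hbig)]
              simpa using hx1.le
            rw [abs_of_nonpos (by linarith), hδdef]
            field_simp
            ring
          rintro z ⟨hz1, hz2⟩
          rw [mem_closedBall, dist_eq_norm] at hz2
          calc ‖x - z‖ = ‖(x - ‖x‖⁻¹ • x) + (‖x‖⁻¹ • x - z)‖ := by
                rw [sub_add_sub_cancel]
            _ ≤ ‖x - ‖x‖⁻¹ • x‖ + ‖‖x‖⁻¹ • x - z‖ := norm_add_le _ _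
            _ ≤ δ + δ := by
                rw [hxz₀]
                apply add_le_add_right
                rw [norm_sub_rev]
                exact hz2
            _ ≤ 4*δ := by linarith
      · refine ⟨e0 m, 1/2, norm_e0 m, by norm_num, by norm_num, by rw [hδdef]; linarith, ?_⟩
        rintro z ⟨hz1, _⟩
        rw [mem_sphere_zero_iff_norm] at hz1
        have h := norm_sub_le x z
        rw [hz1] at h
        have : (1:ℝ)/2 < δ := by rw [hδdef]; linarith
        linarith
    have hcapsub : sphere (0 : EuclideanSpace ℝ (Fin (m+2))) 1 ∩ closedBall z₀ ρ
        ⊆ sphere (0 : EuclideanSpace ℝ (Fin (m+2))) 1 := inter_subset_left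
    have hcapmeas : MeasurableSet
        (sphere (0 : EuclideanSpace ℝ (Fin (m+2))) 1 ∩ closedBall z₀ ρ) :=
      hSmeas.inter measurableSet_closedBall
    have hcapfin : μH[((m+1:ℕ):ℝ)]
        (sphere (0 : EuclideanSpace ℝ (Fin (m+2))) 1 ∩ closedBall z₀ ρ) ≠ ⊤ :=
      (lt_of_le_of_lt (measure_mono hcapsub) (sphere_fin m)).ne
    have hmeaslow : (ρ/2)^(m+1) * κT ≤ (μH[((m+1:ℕ):ℝ)]
        (sphere (0 : EuclideanSpace ℝ (Fin (m+2))) 1 ∩ closedBall z₀ ρ)).toReal := by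
      have h1 := cap_lower m hz₀ hρ0 hρ1
      have h2 := ENNReal.toReal_mono hcapfin h1
      rwa [ENNReal.toReal_mul, ENNReal.toReal_ofReal (by positivity)] at h2
    have hconstle : ∀ z ∈ sphere (0 : EuclideanSpace ℝ (Fin (m+2))) 1 ∩ closedBall z₀ ρ,
        c₀⁻¹ * (δ / ((4*δ)^(m+2+2) * φδ)) ≤ P x z := by
      intro z hz
      have h1 := (hP x hx z hz.1).1
      rw [← hδdef] at h1
      refine le_trans ?_ h1
      apply mul_le_mul_of_nonneg_left _ (inv_nonneg.mpr hc₀0.le)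
      have hw0 : 0 < ‖x - z‖ := lt_of_lt_of_le hδ0 (hwlow z hz.1)
      have hwle : ‖x - z‖ ≤ 4*δ := hcapw z hz
      obtain ⟨hφw, hφle, _⟩ := hphis z hz.1
      apply div_le_div_of_nonneg_left hδ0.le
      · positivity
      · exact mul_le_mul (pow_le_pow_left₀ hw0.le hwle _) hφle hφw.le (by positivity)
    calc C⁻¹ * (δ^2 * φδ)⁻¹ ≤ cLow * (δ^2 * φδ)⁻¹ :=
          mul_le_mul_of_nonneg_right hCinv (inv_nonneg.mpr (by positivity))
      _ ≤ (c₀⁻¹ * (δ / ((4*δ)^(m+2+2) * φδ))) * ((ρ/2)^(m+1) * κT) := by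
          have h48 : (δ/4)^(m+1) ≤ (ρ/2)^(m+1) :=
            pow_le_pow_left₀ (by positivity) (by linarith) _
          have heq3 : (c₀⁻¹ * (δ / ((4*δ)^(m+2+2) * φδ))) * ((δ/4)^(m+1) * κT)
              = cLow * (δ^2 * φδ)⁻¹ := by
            rw [hcLow, mul_pow (4:ℝ) δ (m+2+2), div_pow δ (4:ℝ) (m+1)]
            have h4 : ((4:ℝ))^(2*m+5) = 4^(m+2+2) * 4^(m+1) := by
              rw [← pow_add]
              congr 1
              omega
            rw [h4]
            field_simp
            ring
          rw [← heq3]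
          apply mul_le_mul_of_nonneg_left (mul_le_mul_of_nonneg_right h48 hκT0.le)
          apply mul_nonneg (inv_nonneg.mpr hc₀0.le)
          apply div_nonneg hδ0.le
          positivity
      _ ≤ (c₀⁻¹ * (δ / ((4*δ)^(m+2+2) * φδ))) * (μH[((m+1:ℕ):ℝ)]
            (sphere (0 : EuclideanSpace ℝ (Fin (m+2))) 1 ∩ closedBall z₀ ρ)).toReal := by
          apply mul_le_mul_of_nonneg_left hmeaslow
          apply mul_nonneg (inv_nonneg.mpr hc₀0.le)
          apply div_nonneg hδ0.le
          positivity
      _ ≤ ∫ z in sphere (0 : EuclideanSpace ℝ (Fin (m+2))) 1 ∩ closedBall z₀ ρ,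
            P x z ∂μH[((m+1:ℕ):ℝ)] :=
          setIntegral_ge_of_const_le_real hcapmeas hcapfin hconstle (hIntS.mono_set hcapsub)
      _ ≤ ∫ z in sphere (0 : EuclideanSpace ℝ (Fin (m+2))) 1, P x z ∂μH[((m+1:ℕ):ℝ)] :=
          setIntegral_mono_set hIntS hnnae (HasSubset.Subset.eventuallyLE hcapsub)
  · -- UPPER BOUND
    rw [hieq]
    have hM := ENNReal.toReal_mono hMne hlint
    rw [ENNReal.toReal_mul, ENNReal.toReal_mul, ENNReal.toReal_mul,
      ENNReal.toReal_ofReal (div_nonneg hc₀0.le (mul_nonneg hδ0.le hφδ.le)),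
      ENNReal.toReal_ofReal (by positivity), ENNReal.toReal_ofNat] at hM
    refine le_trans hM ?_
    have heq2 : c₀/(δ*φδ) * (AAT * (2^(m+1)*δ⁻¹*2)) = cUp * (δ^2 * φδ)⁻¹ := by
      rw [hcUp]
      field_simp
      ring
    rw [← hAAT] at *
    rw [heq2]
    exact mul_le_mul_of_nonneg_right hCUp (inv_nonneg.mpr (by positivity))
end

section
/- Let D ⊂ ℝ^d be a nonempty bounded open set, δ_D(x) = dist(x, ℝ^d \ D), and let μ_δ be the measure δ_D(x)dx on D. Let f : D × ℝ → ℝ be a Borel function which is continuous in the second variable, and let u₁, u₂ ∈ L¹(D, μ_δ) with u₁ ≤ u₂ μ_δ-almost everywhere. Assume that for every Borel function u : D → ℝ with u₁ ≤ u ≤ u₂ μ_δ-a.e., the function x ↦ f(x, u(x)) belongs to L¹(D, μ_δ). Then the family 𝓕 = { x ↦ f(x, u(x)) : u Borel, u₁ ≤ u ≤ u₂ μ_δ-a.e. } is uniformly integrable with respect to μ_δ (for every ε > 0 there is η > 0 such that ∫_E |f(x,u(x))| μ_δ(dx) < ε for every measurable E with μ_δ(E) < η and every such u), and in particular 𝓕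 is bounded in L¹(D, μ_δ). -/
set_option maxHeartbeats 1000000

open MeasureTheory Real Set Metric
open scoped ENNReal

/-- Clamping to `[0,1]` does not increase the distance to a point of `[0,1]`. -/
lemma clamp_abs_le {t q : ℝ} (h0 : 0 ≤ t) (h1 : t ≤ 1) :
    |max 0 (min 1 q) - t| ≤ |q - t| := by
  rcases le_total q 0 with h | h
  · rw [min_eq_right (h.trans zero_le_one), max_eq_left h]
    rw [abs_of_nonpos (by linarith), abs_of_nonpos (by linarith)]
    linarith
  rcases le_total 1 q with h' | h'
  · rw [min_eq_left h', max_eq_right zero_le_one]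
    rw [abs_of_nonneg (by linarith), abs_of_nonneg (by linarith)]
    linarith
  · rw [min_eq_right h', max_eq_right h]

/-- Uniform integrability (w.r.t. the weighted measure `δ_D(x)dx`) of the
family of superposition functions `x ↦ f(x,u(x))` over Borel `u` squeezed between `u₁`
and `u₂`, together with boundedness of this family in `L¹(D, δ_D(x)dx)`. -/
theorem uniform_integrability_of_superpositions (d : ℕ)
    (D : Set (EuclideanSpace ℝ (Fin d)))
    (hDopen : IsOpen D) (hDne : D.Nonempty) (hDbdd : Bornology.IsBounded D)
    (μδ : Measure (EuclideanSpace ℝ (Fin d)))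
    (hμδ : μδ = (volume.restrict D).withDensity
      (fun x => ENNReal.ofReal (Metric.infDist x Dᶜ)))
    (f : EuclideanSpace ℝ (Fin d) → ℝ → ℝ)
    (hfmeas : Measurable (Function.uncurry f))
    (hfcont : ∀ x, Continuous (fun t => f x t))
    (u₁ u₂ : EuclideanSpace ℝ (Fin d) → ℝ)
    (hu₁ : Integrable u₁ μδ) (hu₂ : Integrable u₂ μδ)
    (h12 : ∀ᵐ x ∂μδ, u₁ x ≤ u₂ x)
    (hyp : ∀ u : EuclideanSpace ℝ (Fin d) → ℝ, Measurable u →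
      (∀ᵐ x ∂μδ, u₁ x ≤ u x ∧ u x ≤ u₂ x) →
      Integrable (fun x => f x (u x)) μδ) :
    (∀ ε > (0 : ℝ), ∃ η > (0 : ℝ),
      ∀ E : Set (EuclideanSpace ℝ (Fin d)), MeasurableSet E →
        μδ E < ENNReal.ofReal η →
        ∀ u : EuclideanSpace ℝ (Fin d) → ℝ, Measurable u →
          (∀ᵐ x ∂μδ, u₁ x ≤ u x ∧ u x ≤ u₂ x) →
          ∫ x in E, |f x (u x)| ∂μδ < ε) ∧
    (∃ M : ℝ, ∀ u : EuclideanSpace ℝ (Fin d) → ℝ, Measurable u →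
      (∀ᵐ x ∂μδ, u₁ x ≤ u x ∧ u x ≤ u₂ x) →
      ∫ x, |f x (u x)| ∂μδ ≤ M) := by
  classical
  -- μδ is a finite measure
  have hbd : ∀ x ∈ D, infDist x Dᶜ ≤ diam D := by
    intro x hx
    by_contra hcon
    push_neg at hcon
    rcases eq_empty_or_nonempty Dᶜ with hc | hc
    · rw [hc, infDist_empty] at hcon
      exact absurd hcon (not_lt.2 diam_nonneg)
    · obtain ⟨y, hy⟩ := hc
      have hxy : x ≠ y := fun e => hy (e ▸ hx)
      have hnt : Nontrivial (EuclideanSpace ℝ (Fin d)) := ⟨⟨x, y, hxy⟩⟩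
      set r : ℝ := (diam D + infDist x Dᶜ) / 2 with hr
      have hr0 : 0 ≤ r := by
        have := diam_nonneg (s := D); have := infDist_nonneg (s := Dᶜ) (x := x); linarith
      obtain ⟨z, hz⟩ := exists_norm_eq (EuclideanSpace ℝ (Fin d)) hr0
      have hdist : dist x (x + z) = r := by simp [dist_eq_norm, hz]
      have hzD : x + z ∈ Dᶜ := by
        intro hmem
        have := dist_le_diam_of_mem hDbdd hx hmem
        rw [hdist] at this
        linarith
      have := infDist_le_dist_of_mem (x := x) hzD
      rw [hdist] at this
      linarith
  have hμfin : IsFiniteMeasure μδ := by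
    constructor
    rw [hμδ, withDensity_apply _ MeasurableSet.univ, Measure.restrict_univ]
    calc ∫⁻ x, ENNReal.ofReal (infDist x Dᶜ) ∂(volume.restrict D)
        ≤ ∫⁻ _, ENNReal.ofReal (diam D) ∂(volume.restrict D) := by
          refine lintegral_mono_ae ?_
          refine (ae_restrict_iff' hDopen.measurableSet).2 (ae_of_all _ fun x hx => ?_)
          exact ENNReal.ofReal_le_ofReal (hbd x hx)
      _ = ENNReal.ofReal (diam D) * volume D := by
          rw [lintegral_const, Measure.restrict_apply_univ]
      _ < ⊤ := ENNReal.mul_lt_top ENNReal.ofReal_lt_top hDbdd.measure_lt_top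
  -- measurable representatives of u₁, u₂
  set w₁ := hu₁.1.mk u₁ with hw₁def
  set w₂ := hu₂.1.mk u₂ with hw₂def
  have hw₁m : Measurable w₁ := hu₁.1.stronglyMeasurable_mk.measurable
  have hw₂m : Measurable w₂ := hu₂.1.stronglyMeasurable_mk.measurable
  have hw₁e : u₁ =ᵐ[μδ] w₁ := hu₁.1.ae_eq_mk
  have hw₂e : u₂ =ᵐ[μδ] w₂ := hu₂.1.ae_eq_mk
  -- countable dense family of coefficients in [0,1]
  set c : ℕ → ℝ := fun n => max 0 (min 1 ((Denumerable.ofNat ℚ n : ℚ) : ℝ)) with hcdef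
  have hc0 : ∀ n, 0 ≤ c n := fun n => le_max_left _ _
  have hc1 : ∀ n, c n ≤ 1 := fun n => max_le zero_le_one (min_le_left _ _)
  have hcdense : ∀ t : ℝ, 0 ≤ t → t ≤ 1 → ∀ ε : ℝ, 0 < ε → ∃ n, |c n - t| < ε := by
    intro t ht0 ht1 ε hε
    obtain ⟨q, hq⟩ := exists_rat_near t hε
    obtain ⟨n, hn⟩ : ∃ n, Denumerable.ofNat ℚ n = q := ⟨_, Denumerable.ofNat_encode q⟩
    refine ⟨n, ?_⟩
    have hcn : c n = max 0 (min 1 ((q : ℚ) : ℝ)) := by simp only [hcdef]; rw [hn]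
    calc |c n - t| = |max 0 (min 1 ((q : ℚ) : ℝ)) - t| := by rw [hcn]
      _ ≤ |((q : ℚ) : ℝ) - t| := clamp_abs_le ht0 ht1
      _ < ε := by rwa [abs_sub_comm]
  -- the countable family of superpositions
  set v : ℕ → EuclideanSpace ℝ (Fin d) → ℝ := fun n x => w₁ x + c n * (w₂ x - w₁ x) with hvdef
  have hvm : ∀ n, Measurable (v n) := fun n =>
    hw₁m.add ((hw₂m.sub hw₁m).const_mul (c n))
  have hvmem : ∀ n x, w₁ x ≤ w₂ x → w₁ x ≤ v n x ∧ v n x ≤ w₂ x := by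
    intro n x h
    simp only [hvdef]
    constructor <;> nlinarith [hc0 n, hc1 n]
  set F : ℕ → EuclideanSpace ℝ (Fin d) → ℝ := fun n x => |f x (v n x)| with hFdef
  have hFm : ∀ n, Measurable (F n) := fun n =>
    (hfmeas.comp (measurable_id.prodMk (hvm n))).abs
  set G : EuclideanSpace ℝ (Fin d) → ℝ≥0∞ := fun x => ⨆ n, ENNReal.ofReal (F n x) with hGdef
  have hGm : Measurable G := by
    exact Measurable.iSup fun n => (hFm n).ennreal_ofReal
  -- G is finite everywhere
  have hGtop : ∀ x, G x ≠ ⊤ := by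
    intro x
    obtain ⟨C, hC⟩ := (isCompact_Icc (a := min (w₁ x) (w₂ x))
      (b := max (w₁ x) (w₂ x))).exists_bound_of_continuousOn (hfcont x).continuousOn
    have hmem : ∀ n, v n x ∈ Icc (min (w₁ x) (w₂ x)) (max (w₁ x) (w₂ x)) := by
      intro n
      rcases le_total (w₁ x) (w₂ x) with h | h
      · rw [min_eq_left h, max_eq_right h]
        exact ⟨(hvmem n x h).1, (hvmem n x h).2⟩
      · rw [min_eq_right h, max_eq_left h]
        simp only [hvdef]
        constructor <;> nlinarith [hc0 n, hc1 n]
    have hle : G x ≤ ENNReal.ofReal C := by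
      refine iSup_le fun n => ENNReal.ofReal_le_ofReal ?_
      have := hC (v n x) (hmem n)
      rwa [Real.norm_eq_abs] at this
    exact (hle.trans_lt ENNReal.ofReal_lt_top).ne
  -- near-maximizing index exists
  have hP : ∀ x, ∃ n, G x ≤ ENNReal.ofReal (F n x) + 1 := by
    intro x
    rcases le_or_gt (G x) 1 with h | h
    · exact ⟨0, h.trans le_add_self⟩
    · have h1 : G x - 1 < G x := ENNReal.sub_lt_self (hGtop x) (by positivity) one_ne_zero
      have h2 : G x - 1 < ⨆ n, ENNReal.ofReal (F n x) := h1
      obtain ⟨n, hn⟩ := lt_iSup_iff.mp h2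
      refine ⟨n, ?_⟩
      calc G x = (G x - 1) + 1 := (tsub_add_cancel_of_le h.le).symm
        _ ≤ ENNReal.ofReal (F n x) + 1 := add_le_add_left hn.le _
  -- the measurable near-maximizer
  set ustar : EuclideanSpace ℝ (Fin d) → ℝ := fun x => v (Nat.find (hP x)) x with hustardef
  have hustarm : Measurable ustar := by
    refine Measurable.find hvm (fun n => ?_) hP
    exact measurableSet_le hGm ((hFm n).ennreal_ofReal.add measurable_const)
  have hsq_aux : ∀ᵐ x ∂μδ, w₁ x = u₁ x ∧ w₂ x = u₂ x ∧ w₁ x ≤ w₂ x := by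
    filter_upwards [hw₁e, hw₂e, h12] with x e1 e2 h3
    exact ⟨e1.symm, e2.symm, by rw [← e1, ← e2]; exact h3⟩
  have hustar_sq : ∀ᵐ x ∂μδ, u₁ x ≤ ustar x ∧ ustar x ≤ u₂ x := by
    filter_upwards [hsq_aux] with x ⟨e1, e2, h3⟩
    have := hvmem (Nat.find (hP x)) x h3
    exact ⟨e1 ▸ this.1, e2 ▸ this.2⟩
  have hI : Integrable (fun x => f x (ustar x)) μδ := hyp _ hustarm hustar_sq
  -- the integral of G is finite
  have hGint : ∫⁻ x, G x ∂μδ < ⊤ := by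
    calc ∫⁻ x, G x ∂μδ ≤ ∫⁻ x, (ENNReal.ofReal |f x (ustar x)| + 1) ∂μδ :=
        lintegral_mono fun x => Nat.find_spec (hP x)
      _ = (∫⁻ x, ENNReal.ofReal |f x (ustar x)| ∂μδ) + ∫⁻ _, 1 ∂μδ :=
        lintegral_add_right _ measurable_const
      _ < ⊤ := by
        refine ENNReal.add_lt_top.2 ⟨?_, ?_⟩
        · have h := hI.hasFiniteIntegral
          rw [hasFiniteIntegral_iff_norm] at h
          simpa [Real.norm_eq_abs] using h
        · rw [lintegral_one]
          exact measure_lt_top _ _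
  set gR : EuclideanSpace ℝ (Fin d) → ℝ := fun x => (G x).toReal with hgRdef
  have hgRnn : ∀ x, 0 ≤ gR x := fun x => ENNReal.toReal_nonneg
  have hgRint : Integrable gR μδ :=
    integrable_toReal_of_lintegral_ne_top hGm.aemeasurable hGint.ne
  -- domination: every admissible superposition is dominated by gR
  have hdom : ∀ u : EuclideanSpace ℝ (Fin d) → ℝ,
      (∀ᵐ x ∂μδ, u₁ x ≤ u x ∧ u x ≤ u₂ x) →
      ∀ᵐ x ∂μδ, |f x (u x)| ≤ gR x := by
    intro u hsq
    filter_upwards [hsq_aux, hsq] with x ⟨e1, e2, h3⟩ ⟨hl, hr⟩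
    have hl' : w₁ x ≤ u x := e1 ▸ hl
    have hr' : u x ≤ w₂ x := e2 ▸ hr
    suffices h : ENNReal.ofReal |f x (u x)| ≤ G x by
      have h2 := ENNReal.toReal_mono (hGtop x) h
      rwa [ENNReal.toReal_ofReal (abs_nonneg _)] at h2
    refine ENNReal.le_of_forall_pos_le_add fun ε hε _ => ?_
    -- find n with |f x (u x)| ≤ F n x + ε
    have hεR : (0 : ℝ) < ε := hε
    obtain ⟨δ, hδ, hδ'⟩ := Metric.continuousAt_iff.mp ((hfcont x).continuousAt (x := u x)) (ε : ℝ) hεR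
    have hex : ∃ n, |v n x - u x| < δ := by
      rcases eq_or_lt_of_le h3 with heq | hlt
      · refine ⟨0, ?_⟩
        have : v 0 x = u x := by
          have h4 : u x = w₁ x := le_antisymm (heq ▸ hr') hl'
          rw [hvdef]; simp [← heq, h4]
        simpa [this] using hδ
      · set t : ℝ := (u x - w₁ x) / (w₂ x - w₁ x) with htdef
        have hden : 0 < w₂ x - w₁ x := by linarith
        have ht0 : 0 ≤ t := div_nonneg (by linarith) hden.le
        have ht1 : t ≤ 1 := by
          rw [htdef, div_le_one hden]; linarith
        obtain ⟨n, hn⟩ := hcdense t ht0 ht1 (δ / (w₂ x - w₁ x)) (by positivity)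
        refine ⟨n, ?_⟩
        have hvt : v n x - u x = (c n - t) * (w₂ x - w₁ x) := by
          rw [hvdef, htdef]; field_simp; ring
        rw [hvt, abs_mul, abs_of_pos hden]
        calc |c n - t| * (w₂ x - w₁ x) < (δ / (w₂ x - w₁ x)) * (w₂ x - w₁ x) := by
              exact mul_lt_mul_of_pos_right hn hden
          _ = δ := by field_simp
    obtain ⟨n, hn⟩ := hex
    have hclose : |f x (v n x) - f x (u x)| < ε := by
      have := hδ' (show dist (v n x) (u x) < δ by rwa [Real.dist_eq])
      rwa [Real.dist_eq] at this
    have hkey : |f x (u x)| ≤ F n x + ε := by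
      have h5 : |f x (u x)| - |f x (v n x)| ≤ |f x (u x) - f x (v n x)| :=
        abs_sub_abs_le_abs_sub _ _
      rw [abs_sub_comm] at hclose
      rw [hFdef]
      simp only
      linarith [le_of_lt hclose, h5]
    calc ENNReal.ofReal |f x (u x)| ≤ ENNReal.ofReal (F n x + ε) :=
        ENNReal.ofReal_le_ofReal hkey
      _ = ENNReal.ofReal (F n x) + ENNReal.ofReal (ε : ℝ) :=
        ENNReal.ofReal_add (abs_nonneg _) hεR.le
      _ ≤ G x + ε := by
        refine add_le_add (le_iSup (fun n => ENNReal.ofReal (F n x)) n) ?_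
        rw [ENNReal.ofReal_coe_nnreal]
  constructor
  · -- uniform integrability
    intro ε hε
    obtain ⟨δ, hδpos, hδ⟩ := (memLp_one_iff_integrable.mpr hgRint).eLpNorm_indicator_le
      le_rfl ENNReal.one_ne_top (half_pos hε)
    refine ⟨δ, hδpos, fun E hE hμE u hum hsq => ?_⟩
    have hIu : Integrable (fun x => |f x (u x)|) μδ := (hyp u hum hsq).abs
    have h1 : ∫ x in E, |f x (u x)| ∂μδ ≤ ∫ x in E, gR x ∂μδ := by
      refine integral_mono_ae hIu.restrict hgRint.restrict ?_
      exact ae_restrict_of_ae (hdom u hsq)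
    have h2 : ∫ x in E, gR x ∂μδ ≤ ε / 2 := by
      have hsn := hδ E hE hμE.le
      rw [eLpNorm_indicator_eq_eLpNorm_restrict hE] at hsn
      have heq : ∫ x in E, gR x ∂μδ = (eLpNorm gR 1 (μδ.restrict E)).toReal := by
        rw [integral_eq_lintegral_of_nonneg_ae (ae_of_all _ hgRnn)
          (hgRint.restrict (s := E)).1]
        congr 1
        rw [eLpNorm_one_eq_lintegral_enorm]
        refine lintegral_congr fun x => ?_
        rw [← ofReal_norm_eq_enorm, Real.norm_eq_abs, abs_of_nonneg (hgRnn x)]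
      rw [heq]
      calc (eLpNorm gR 1 (μδ.restrict E)).toReal ≤ (ENNReal.ofReal (ε / 2)).toReal :=
          ENNReal.toReal_mono ENNReal.ofReal_ne_top hsn
        _ = ε / 2 := ENNReal.toReal_ofReal (by linarith)
    linarith
  · -- boundedness
    refine ⟨∫ x, gR x ∂μδ, fun u hum hsq => ?_⟩
    exact integral_mono_ae (hyp u hum hsq).abs hgRint (hdom u hsq)
end

section
/- For every real d > 0 and every c > 0 there exists a constant C > 0, depending only on d and c, such that for all a, b, r > 0: ∫₀^{r²} min(ab/t, 1) · t^{−(d/2+2)} · e^{−cr²/t} dt ≤ C · min(ab/r², 1) · r^{−(d+2)}. -/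
open MeasureTheory Real Set

lemma aux_rpow_le_factorial_mul_exp (β : ℝ) (hβ : 0 ≤ β) (x : ℝ) (hx : 0 < x) :
    x ^ β ≤ (Nat.ceil β).factorial * Real.exp x := by
  set n := Nat.ceil β with hn
  have hfac : (1:ℝ) ≤ (n.factorial : ℝ) := by exact_mod_cast Nat.one_le_iff_ne_zero.mpr n.factorial_ne_zero
  rcases le_or_gt x 1 with h1 | h1
  · have := Real.one_le_exp hx.le
    calc x ^ β ≤ 1 := Real.rpow_le_one hx.le h1 hβ
    _ ≤ (n.factorial : ℝ) * Real.exp x := by nlinarith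
  · have h2 : x ^ β ≤ x ^ (n:ℝ) :=
      Real.rpow_le_rpow_of_exponent_le h1.le (Nat.le_ceil β)
    have h3 : x ^ (n:ℝ) = x ^ n := Real.rpow_natCast x n
    have h4 : x ^ n / n.factorial ≤ Real.exp x := by
      calc (x:ℝ) ^ n / n.factorial ≤ ∑ i ∈ Finset.range (n+1), x ^ i / (i.factorial : ℝ) := by
            refine Finset.single_le_sum (f := fun i => x ^ i / (i.factorial : ℝ)) ?_
              (Finset.self_mem_range_succ n)
            intro i _
            positivity
        _ ≤ Real.exp x := Real.sum_le_exp_of_nonneg hx.le _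
    have h5 : x ^ n ≤ (n.factorial : ℝ) * Real.exp x := by
      rw [div_le_iff₀ (by positivity)] at h4
      linarith [h4]
    calc x ^ β ≤ x ^ (n:ℝ) := h2
    _ = x ^ n := h3
    _ ≤ (n.factorial : ℝ) * Real.exp x := h5

/-- For every real `d > 0` and `c > 0` there is `C > 0` (depending only
on `d` and `c`) such that for all `a, b, r > 0`,
`∫₀^{r²} min(ab/t,1) t^{−(d/2+2)} e^{−cr²/t} dt ≤ C min(ab/r²,1) r^{−(d+2)}`. -/
theorem small_time_heat_kernel_integral_bound :
    ∀ d > (0 : ℝ), ∀ c > (0 : ℝ), ∃ C > (0 : ℝ),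
      ∀ a > (0 : ℝ), ∀ b > (0 : ℝ), ∀ r > (0 : ℝ),
        (∫ t in Ioc (0 : ℝ) (r ^ 2),
            min (a * b / t) 1 * t ^ (-(d / 2 + 2)) * Real.exp (-(c * r ^ 2 / t))) ≤
          C * min (a * b / r ^ 2) 1 * r ^ (-(d + 2)) := by
  intro d hd c hc
  set β : ℝ := d / 2 + 3 with hβdef
  have hβ : (0:ℝ) ≤ β := by positivity
  set N : ℝ := ((Nat.ceil β).factorial : ℝ) with hN
  have hNpos : (0:ℝ) < N := by positivity
  set K : ℝ := N * c ^ (-β) with hK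
  have hcb : (0:ℝ) < c ^ (-β) := Real.rpow_pos_of_pos hc _
  have hKpos : 0 < K := mul_pos hNpos hcb
  refine ⟨K, hKpos, ?_⟩
  intro a ha b hb r hr
  have hr2 : (0:ℝ) < r ^ 2 := by positivity
  set m : ℝ := min (a * b / r ^ 2) 1 with hm
  have hmpos : 0 < m := lt_min (by positivity) one_pos
  -- pointwise bound on the integrand
  have key : ∀ t ∈ Ioc (0:ℝ) (r ^ 2),
      min (a * b / t) 1 * t ^ (-(d / 2 + 2)) * Real.exp (-(c * r ^ 2 / t))
        ≤ K * m * r ^ (-(d + 4)) := by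
    intro t ht
    obtain ⟨ht0, htr⟩ := ht
    have hrt : (1:ℝ) ≤ r ^ 2 / t := (one_le_div ht0).mpr htr
    -- step 1 : min bound
    have h1 : min (a * b / t) 1 ≤ (r ^ 2 / t) * m := by
      have he : a * b / t = (r ^ 2 / t) * (a * b / r ^ 2) := by
        field_simp
      rw [he, hm]
      calc min ((r ^ 2 / t) * (a * b / r ^ 2)) 1
          ≤ min ((r ^ 2 / t) * (a * b / r ^ 2)) ((r ^ 2 / t) * 1) := by
            exact min_le_min le_rfl (by linarith)
        _ = (r ^ 2 / t) * min (a * b / r ^ 2) 1 := by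
            rw [mul_min_of_nonneg _ _ (by positivity : (0:ℝ) ≤ r ^ 2 / t)]
    -- step 2 : t^(-β) exp(-x) ≤ N (c r²)^(-β)
    have hx : (0:ℝ) < c * r ^ 2 / t := by positivity
    have hcr : (0:ℝ) < c * r ^ 2 := by positivity
    have h3 : t ^ (-β) * Real.exp (-(c * r ^ 2 / t)) ≤ N * (c * r ^ 2) ^ (-β) := by
      have haux := aux_rpow_le_factorial_mul_exp β hβ _ hx
      rw [Real.div_rpow hcr.le ht0.le] at haux
      have htb : (0:ℝ) < t ^ β := Real.rpow_pos_of_pos ht0 _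
      have hcbr : (0:ℝ) < (c * r ^ 2) ^ β := Real.rpow_pos_of_pos hcr _
      have hex : (0:ℝ) < Real.exp (c * r ^ 2 / t) := Real.exp_pos _
      have h := (div_le_iff₀ htb).mp haux
      rw [Real.rpow_neg ht0.le, Real.rpow_neg hcr.le, Real.exp_neg]
      rw [← mul_inv, ← one_div, ← div_eq_mul_inv,
        div_le_div_iff₀ (by positivity) hcbr]
      nlinarith [h, htb, hex]
    -- step 3 : combine powers of t
    have hpow : t ^ (-(d / 2 + 2)) * t⁻¹ = t ^ (-β) := by
      rw [← Real.rpow_neg_one t, ← Real.rpow_add ht0]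
      congr 1
      rw [hβdef]; ring
    have hA : (0:ℝ) ≤ t ^ (-(d / 2 + 2)) * Real.exp (-(c * r ^ 2 / t)) := by positivity
    calc min (a * b / t) 1 * t ^ (-(d / 2 + 2)) * Real.exp (-(c * r ^ 2 / t))
        = min (a * b / t) 1 * (t ^ (-(d / 2 + 2)) * Real.exp (-(c * r ^ 2 / t))) := by ring
      _ ≤ (r ^ 2 / t) * m * (t ^ (-(d / 2 + 2)) * Real.exp (-(c * r ^ 2 / t))) :=
          mul_le_mul_of_nonneg_right h1 hA
      _ = m * r ^ 2 * (t ^ (-β) * Real.exp (-(c * r ^ 2 / t))) := by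
          rw [← hpow]; field_simp
      _ ≤ m * r ^ 2 * (N * (c * r ^ 2) ^ (-β)) := by
          apply mul_le_mul_of_nonneg_left h3 (by positivity)
      _ = K * m * r ^ (-(d + 4)) := by
          rw [Real.mul_rpow hc.le hr2.le, hK]
          have : (r ^ 2 : ℝ) ^ (-β) = r ^ (-(d + 6)) := by
            rw [← Real.rpow_natCast r 2, ← Real.rpow_mul hr.le]
            congr 1
            rw [hβdef]; push_cast; ring
          rw [this]
          have : (r:ℝ) ^ 2 * r ^ (-(d + 6)) = r ^ (-(d + 4)) := by
            rw [← Real.rpow_natCast r 2, ← Real.rpow_add hr]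
            congr 1
            push_cast; ring
          linear_combination (m * N * c ^ (-β)) * this
  -- now integrate
  have hmeas : MeasurableSet (Ioc (0:ℝ) (r ^ 2)) := measurableSet_Ioc
  have hle : (∫ t in Ioc (0:ℝ) (r ^ 2),
      min (a * b / t) 1 * t ^ (-(d / 2 + 2)) * Real.exp (-(c * r ^ 2 / t)))
      ≤ ∫ _ in Ioc (0:ℝ) (r ^ 2), K * m * r ^ (-(d + 4)) := by
    refine integral_mono_of_nonneg ?_ ?_ ?_
    · rw [Filter.EventuallyLE, ae_restrict_iff' hmeas]
      filter_upwards with t ht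
      have := ht.1
      positivity
    · exact integrableOn_const (by rw [Real.volume_Ioc]; exact ENNReal.ofReal_ne_top)
    · rw [Filter.EventuallyLE, ae_restrict_iff' hmeas]
      filter_upwards with t ht
      exact key t ht
  have hconst : (∫ _ in Ioc (0:ℝ) (r ^ 2), K * m * r ^ (-(d + 4)))
      = r ^ 2 * (K * m * r ^ (-(d + 4))) := by
    rw [setIntegral_const, Real.volume_real_Ioc, smul_eq_mul]
    norm_num [hr2.le]
  have hfin : r ^ 2 * (K * m * r ^ (-(d + 4))) = K * m * r ^ (-(d + 2)) := by
    have : (r:ℝ) ^ 2 * r ^ (-(d + 4)) = r ^ (-(d + 2)) := by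
      rw [← Real.rpow_natCast r 2, ← Real.rpow_add hr]
      congr 1
      push_cast; ring
    linear_combination (K * m) * this
  calc _ ≤ _ := hle
    _ = r ^ 2 * (K * m * r ^ (-(d + 4))) := hconst
    _ = K * m * r ^ (-(d + 2)) := hfin
end
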